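/- Comparison principle for the non-local Eikonal equation: under assumptions (H1)–(H3) and (H9), if f^ε : M̃ × [0,T) → ℝ is a bounded, upper semicontinuous (in t) viscosity sub-solution of the non-local problem (P_ε) in M̃_T and g^ε : M̃ × [0,T) → ℝ is a lower semicontinuous (in t) viscosity super-solution of (P_ε) in M̃_T, then f^ε(x,t) ≤ g^ε(x,t) for all (x,t) ∈ M̃ × [0,T). -/

import Mathlib

/-- The weighted directional internal gradient operator
`|∇⁻_{η_ε} f (x,t)|_∞ = max_{y ∈ M̃} J(x,y) (f(x,t) - f(y,t))`,
where the maximum is taken over the finite set `Mt`. -/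
noncomputable def nonlocalGrad {M : Type*} {τ : Type*} (Mt : Finset M) (hMt : Mt.Nonempty)
    (J : M → M → ℝ) (f : M → τ → ℝ) (x : M) (t : τ) : ℝ :=
  Mt.sup' hMt fun y => J x y * (f x t - f y t)

/-- The `ε`-scaled kernel `J_ε(x,y) = C_η⁻¹ ε⁻¹ η(d̃(x,y)/ε)`. -/
noncomputable def Jker {M : Type*} (η : ℝ → ℝ) (Cη ε : ℝ) (dt : M → M → ℝ)
    (x y : M) : ℝ :=
  Cη⁻¹ * (ε⁻¹ * η (dt x y / ε))

/-- Viscosity sub-solution of the non-local problem (P_ε) in `M̃_T`. -/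
def IsNonlocalSubSol {M : Type*} (Mt Γt : Finset M) (hMt : Mt.Nonempty) (J : M → M → ℝ)
    (Pt f0 : M → ℝ) (T : ℝ) (f : M → ℝ → ℝ) : Prop :=
  (∀ x ∈ Mt, x ∉ Γt → ∀ t₀ ∈ Set.Ioo (0:ℝ) T, ∀ φ : ℝ → ℝ,
      ContDiff ℝ 1 φ → IsLocalMax (fun s => f x s - φ s) t₀ →
      deriv φ t₀ + nonlocalGrad Mt hMt J f x t₀ ≤ Pt x) ∧
  (∀ x ∈ Γt, ∀ t ∈ Set.Ioo (0:ℝ) T, f x t ≤ f0 x) ∧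
  (∀ x ∈ Mt, f x 0 ≤ f0 x)

/-- Viscosity super-solution of the non-local problem (P_ε) in `M̃_T`. -/
def IsNonlocalSuperSol {M : Type*} (Mt Γt : Finset M) (hMt : Mt.Nonempty) (J : M → M → ℝ)
    (Pt f0 : M → ℝ) (T : ℝ) (f : M → ℝ → ℝ) : Prop :=
  (∀ x ∈ Mt, x ∉ Γt → ∀ t₀ ∈ Set.Ioo (0:ℝ) T, ∀ φ : ℝ → ℝ,
      ContDiff ℝ 1 φ → IsLocalMin (fun s => f x s - φ s) t₀ →
      Pt x ≤ deriv φ t₀ + nonlocalGrad Mt hMt J f x t₀) ∧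
  (∀ x ∈ Γt, ∀ t ∈ Set.Ioo (0:ℝ) T, f0 x ≤ f x t) ∧
  (∀ x ∈ Mt, f0 x ≤ f x 0)


open Filter Set Topology

/-- An upper semicontinuous real function on a nonempty compact set attains its maximum. -/
lemma usc_max_on_compact {α : Type*} [TopologicalSpace α] {s : Set α} (hs : IsCompact s)
    (hne : s.Nonempty) {f : α → ℝ} (hf : UpperSemicontinuousOn f s) :
    ∃ x ∈ s, ∀ y ∈ s, f y ≤ f x := by
  by_contra h
  push_neg at h
  have key : ∀ x ∈ s, ∃ u : Set α, u ∈ 𝓝 x ∧ ∃ c : ℝ, (∃ w ∈ s, f w = c) ∧ ∀ z ∈ u ∩ s, f z < c := by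
    intro x hx
    obtain ⟨y, hys, hxy⟩ := h x hx
    have hev : ∀ᶠ z in 𝓝[s] x, f z < f y := hf x hx (f y) hxy
    rw [eventually_iff, mem_nhdsWithin] at hev
    obtain ⟨u, hu_open, hxu, hsub⟩ := hev
    exact ⟨u, hu_open.mem_nhds hxu, f y, ⟨y, hys, rfl⟩, fun z hz => hsub hz⟩
  choose! u hu c hc hlt using key
  obtain ⟨t, hts, hcov⟩ := hs.elim_nhds_subcover u hu
  obtain ⟨x₀, hx₀⟩ := hne
  have hx₀' := hcov hx₀
  simp only [Set.mem_iUnion] at hx₀'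
  obtain ⟨z, hzt, _⟩ := hx₀'
  obtain ⟨zs, hzts, hmaxz⟩ := t.exists_max_image c ⟨z, hzt⟩
  obtain ⟨w, hws, hwc⟩ := hc zs (hts zs hzts)
  have hw' := hcov hws
  simp only [Set.mem_iUnion] at hw'
  obtain ⟨z', hz't, hwz'⟩ := hw'
  have h1 : f w < c z' := hlt z' (hts z' hz't) w ⟨hwz', hws⟩
  have h2 : c z' ≤ c zs := hmaxz z' hz't
  rw [hwc] at h1
  exact absurd (h1.trans_le h2) (lt_irrefl _)

/-- Upper semicontinuity of a doubled-variable functional. -/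
lemma usc_aux {T T₂ : ℝ} (hT₂T : T₂ < T) {F G : ℝ → ℝ}
    (hF : UpperSemicontinuousOn F (Set.Ico 0 T))
    (hG : LowerSemicontinuousOn G (Set.Ico 0 T))
    {pen : ℝ × ℝ → ℝ} (hpen : Continuous pen) :
    UpperSemicontinuousOn (fun p : ℝ × ℝ => F p.1 - G p.2 - pen p)
      (Set.Icc 0 T₂ ×ˢ Set.Icc 0 T₂) := by
  intro p hp y hy
  replace hy : F p.1 - G p.2 - pen p < y := hy
  have hsub : Set.Icc (0:ℝ) T₂ ⊆ Set.Ico 0 T := fun u hu => ⟨hu.1, lt_of_le_of_lt hu.2 hT₂T⟩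
  set c := (y - (F p.1 - G p.2 - pen p))/3 with hcdef
  have hc : 0 < c := by rw [hcdef]; linarith
  have hQeq : 𝓝[Set.Icc (0:ℝ) T₂ ×ˢ Set.Icc (0:ℝ) T₂] p = 𝓝[Set.Icc (0:ℝ) T₂] p.1 ×ˢ 𝓝[Set.Icc (0:ℝ) T₂] p.2 := by
    rw [← nhdsWithin_prod_eq]
  have E1 : ∀ᶠ q : ℝ × ℝ in 𝓝[Set.Icc (0:ℝ) T₂ ×ˢ Set.Icc (0:ℝ) T₂] p, F q.1 < F p.1 + c := by
    have h1 := hF p.1 (hsub hp.1) (F p.1 + c) (by linarith)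
    have ht : Filter.Tendsto Prod.fst (𝓝[Set.Icc (0:ℝ) T₂ ×ˢ Set.Icc (0:ℝ) T₂] p)
        (𝓝[Set.Ico (0:ℝ) T] p.1) := by
      rw [hQeq]
      exact Filter.tendsto_fst.mono_right (nhdsWithin_mono _ hsub)
    exact ht.eventually h1
  have E2 : ∀ᶠ q : ℝ × ℝ in 𝓝[Set.Icc (0:ℝ) T₂ ×ˢ Set.Icc (0:ℝ) T₂] p, G p.2 - c < G q.2 := by
    have h1 := hG p.2 (hsub hp.2) (G p.2 - c) (by linarith)
    have ht : Filter.Tendsto Prod.snd (𝓝[Set.Icc (0:ℝ) T₂ ×ˢ Set.Icc (0:ℝ) T₂] p)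
        (𝓝[Set.Ico (0:ℝ) T] p.2) := by
      rw [hQeq]
      exact Filter.tendsto_snd.mono_right (nhdsWithin_mono _ hsub)
    exact ht.eventually h1
  have E3 : ∀ᶠ q : ℝ × ℝ in 𝓝[Set.Icc (0:ℝ) T₂ ×ˢ Set.Icc (0:ℝ) T₂] p, pen p - c < pen q := by
    have h1 : ∀ᶠ z in 𝓝 (pen p), pen p - c < z := eventually_gt_nhds (by linarith)
    exact ((hpen.tendsto p).eventually h1).filter_mono nhdsWithin_le_nhds
  filter_upwards [E1, E2, E3] with q h1 h2 h3
  show F q.1 - G q.2 - pen q < y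
  have h4 : 3*c = y - (F p.1 - G p.2 - pen p) := by rw [hcdef]; ring
  linarith

set_option maxHeartbeats 2000000 in
/-- **Comparison principle for the non-local Eikonal equation** (Proposition 3.11).
Under (H1)–(H3) and (H9), a bounded usc-in-time viscosity sub-solution of (P_ε)
lies below any lsc-in-time viscosity super-solution of (P_ε) on `M̃ × [0,T)`. -/
theorem nonlocal_comparison_principle
    {M : Type*} [MetricSpace M] [CompactSpace M]
    (Mt Γt : Finset M) (hMt : Mt.Nonempty) (hΓ : Γt ⊆ Mt)
    (T ε : ℝ) (hT : 0 < T) (hε : 0 < ε)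
    (η : ℝ → ℝ) (hη : ∀ t, 0 ≤ η t)
    (Cη : ℝ) (hCη_pos : 0 < Cη)
    (hCη_sup : IsLUB ((fun t => t * η t) '' Set.Ici (0:ℝ)) Cη)
    (dt : M → M → ℝ) (hdt_symm : ∀ x y, dt x y = dt y x)
    (hdt_nonneg : ∀ x y, 0 ≤ dt x y)
    (Pt f0 : M → ℝ) (hPt_nonneg : ∀ x ∈ Mt, x ∉ Γt → 0 ≤ Pt x)
    (f g : M → ℝ → ℝ)
    (hf_bdd : ∃ C, ∀ x ∈ Mt, ∀ t ∈ Set.Ico (0:ℝ) T, |f x t| ≤ C)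
    (hf_usc : ∀ x ∈ Mt, UpperSemicontinuousOn (f x) (Set.Ico (0:ℝ) T))
    (hg_lsc : ∀ x ∈ Mt, LowerSemicontinuousOn (g x) (Set.Ico (0:ℝ) T))
    (hf_sub : IsNonlocalSubSol Mt Γt hMt (Jker η Cη ε dt) Pt f0 T f)
    (hg_super : IsNonlocalSuperSol Mt Γt hMt (Jker η Cη ε dt) Pt f0 T g) :
    ∀ x ∈ Mt, ∀ t ∈ Set.Ico (0:ℝ) T, f x t ≤ g x t := by
  have hJ : ∀ x y, 0 ≤ Jker η Cη ε dt x y := fun x y =>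
    mul_nonneg (inv_nonneg.mpr hCη_pos.le) (mul_nonneg (inv_nonneg.mpr hε.le) (hη _))
  by_contra hcon
  push_neg at hcon
  obtain ⟨xs, hxs, ts, hts, hlt⟩ := hcon
  rcases eq_or_lt_of_le hts.1 with h0 | htspos
  · have h1 : f xs 0 ≤ f0 xs := hf_sub.2.2 xs hxs
    have h2 : f0 xs ≤ g xs 0 := hg_super.2.2 xs hxs
    rw [← h0] at hlt
    linarith
  set θ := f xs ts - g xs ts with hθdef
  have hθ : 0 < θ := by rw [hθdef]; linarith
  set T₂ := (ts + T)/2 with hT₂def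
  have htsT₂ : ts < T₂ := by rw [hT₂def]; linarith [hts.2]
  have hT₂T : T₂ < T := by rw [hT₂def]; linarith [hts.2]
  have hT₂0 : 0 < T₂ := lt_trans htspos htsT₂
  have hsubIccIco : Set.Icc (0:ℝ) T₂ ⊆ Set.Ico (0:ℝ) T :=
    fun u hu => ⟨hu.1, lt_of_le_of_lt hu.2 hT₂T⟩
  -- bounds on f and g
  obtain ⟨C, hC⟩ := hf_bdd
  have hC0 : 0 ≤ C := (abs_nonneg _).trans (hC xs hxs ts hts)
  have hfleC : ∀ x ∈ Mt, ∀ t ∈ Set.Ico (0:ℝ) T, f x t ≤ C :=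
    fun x hx t ht => (le_abs_self _).trans (hC x hx t ht)
  have hCg_ex : ∀ x ∈ Mt, ∃ c : ℝ, ∀ s ∈ Set.Icc (0:ℝ) T₂, -c ≤ g x s := by
    intro x hx
    have husc : UpperSemicontinuousOn (fun s => -g x s) (Set.Icc (0:ℝ) T₂) := by
      intro s hs y hy
      replace hy : -g x s < y := hy
      have h1 := hg_lsc x hx s (hsubIccIco hs) (-y) (by linarith)
      have hmono : 𝓝[Set.Icc (0:ℝ) T₂] s ≤ 𝓝[Set.Ico (0:ℝ) T] s :=
        nhdsWithin_mono _ hsubIccIco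
      exact (h1.filter_mono hmono).mono fun z hz => by
        show -g x z < y
        linarith
    obtain ⟨m, hm, hmax'⟩ := usc_max_on_compact isCompact_Icc
      ⟨0, Set.left_mem_Icc.mpr hT₂0.le⟩ husc
    refine ⟨-g x m, fun s hs => ?_⟩
    have := hmax' s hs
    replace this : -g x s ≤ -g x m := this
    linarith
  choose! cg hcg using hCg_ex
  set Cg := max 0 (Mt.sup' hMt cg) with hCgdef
  have hCg0 : 0 ≤ Cg := le_max_left _ _
  have hCg : ∀ x ∈ Mt, ∀ s ∈ Set.Icc (0:ℝ) T₂, -Cg ≤ g x s := by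
    intro x hx s hs
    have h1 : cg x ≤ Cg := (Finset.le_sup' cg hx).trans (le_max_right _ _)
    linarith [hcg x hx s hs]
  -- semicontinuity control near time 0
  have hr_ex : ∀ x ∈ Mt, ∃ r, 0 < r ∧ ∀ s ∈ Set.Ico (0:ℝ) T, s < r →
      g x 0 - θ/8 ≤ g x s ∧ f x s ≤ f x 0 + θ/8 := by
    intro x hx
    have h0T : (0:ℝ) ∈ Set.Ico (0:ℝ) T := ⟨le_refl 0, hT⟩
    have hg1 := hg_lsc x hx 0 h0T (g x 0 - θ/8) (by linarith)
    have hf1 := hf_usc x hx 0 h0T (f x 0 + θ/8) (by linarith)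
    have hand := hg1.and hf1
    rw [Filter.eventually_iff, Metric.mem_nhdsWithin_iff] at hand
    obtain ⟨ρ, hρ, hsub2⟩ := hand
    refine ⟨ρ, hρ, fun s hs hsρ => ?_⟩
    have hmem : s ∈ Metric.ball (0:ℝ) ρ ∩ Set.Ico 0 T := by
      refine ⟨?_, hs⟩
      simp only [Metric.mem_ball, Real.dist_eq, sub_zero, abs_of_nonneg hs.1]
      exact hsρ
    have h5 := hsub2 hmem
    exact ⟨h5.1.le, h5.2.le⟩
  choose! r hrpos hr using hr_ex
  set r₀ := Mt.inf' hMt r with hr₀def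
  have hr₀pos : 0 < r₀ := by
    rw [hr₀def, Finset.lt_inf'_iff]
    exact hrpos
  -- parameters
  set σ := θ/(8*(T+1)) with hσdef
  have hσ : 0 < σ := by rw [hσdef]; positivity
  have hσts : σ * ts ≤ θ/8 := by
    have h1 : σ * ts ≤ σ * (T+1) := mul_le_mul_of_nonneg_left (by linarith [hts.2]) hσ.le
    have h2 : σ * (T+1) = θ/8 := by
      rw [hσdef]; field_simp
    linarith
  set A := C + Cg + θ with hAdef
  have hA : 0 < A := by rw [hAdef]; linarith
  set κ := ts / T₂ with hκdef
  have hκ0 : 0 < κ := div_pos htspos hT₂0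
  have hκ1 : κ < 1 := (div_lt_one hT₂0).mpr htsT₂
  obtain ⟨n, hn⟩ := exists_pow_lt_of_lt_one (show 0 < θ/(16*A) by positivity) hκ1
  have hAκ : A * κ^n ≤ θ/16 := by
    have h1 := mul_lt_mul_of_pos_left hn hA
    have h2 : A * (θ/(16*A)) = θ/16 := by field_simp [hA.ne']
    linarith
  set δ := r₀^2/(2*(C+Cg+1)) with hδdef
  have hδ : 0 < δ := by rw [hδdef]; positivity
  have hden : (0:ℝ) < C + Cg + 1 := by linarith
  have hδr : 2*δ*(C+Cg) + 2*δ = r₀^2 := by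
    rw [hδdef]; field_simp
  have hP1 : ∀ t : ℝ, 0 ≤ t → 0 ≤ σ*t + A*(t/T₂)^n := by
    intro t ht
    have h1 : 0 ≤ σ*t := mul_nonneg hσ.le ht
    have h2 : 0 ≤ A*(t/T₂)^n := mul_nonneg hA.le (pow_nonneg (div_nonneg ht hT₂0.le) n)
    linarith
  -- maximization of the doubled functional
  set Q : Set (ℝ × ℝ) := Set.Icc (0:ℝ) T₂ ×ˢ Set.Icc (0:ℝ) T₂ with hQdef
  have hQcomp : IsCompact Q := isCompact_Icc.prod isCompact_Icc
  have hQne : Q.Nonempty :=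
    ⟨(0,0), ⟨Set.left_mem_Icc.mpr hT₂0.le, Set.left_mem_Icc.mpr hT₂0.le⟩⟩
  have hmax_ex : ∀ x ∈ Mt, ∃ p ∈ Q, ∀ q ∈ Q,
      (fun p : ℝ × ℝ => f x p.1 - g x p.2 -
        ((p.1-p.2)^2/(2*δ) + (σ*p.1 + A*(p.1/T₂)^n) + (σ*p.2 + A*(p.2/T₂)^n))) q ≤
      (fun p : ℝ × ℝ => f x p.1 - g x p.2 -
        ((p.1-p.2)^2/(2*δ) + (σ*p.1 + A*(p.1/T₂)^n) + (σ*p.2 + A*(p.2/T₂)^n))) p := by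
    intro x hx
    refine usc_max_on_compact hQcomp hQne ?_
    exact usc_aux hT₂T (hf_usc x hx) (hg_lsc x hx) (by fun_prop)
  choose! p hpQ hpmax using hmax_ex
  obtain ⟨x₀, hx₀, hx₀max⟩ := Mt.exists_max_image (fun x => f x (p x).1 - g x (p x).2 -
      (((p x).1-(p x).2)^2/(2*δ) + (σ*(p x).1 + A*((p x).1/T₂)^n) +
        (σ*(p x).2 + A*((p x).2/T₂)^n))) hMt
  set t₀ := (p x₀).1 with ht₀def
  set s₀ := (p x₀).2 with hs₀def
  have ht₀Icc : t₀ ∈ Set.Icc (0:ℝ) T₂ := (hpQ x₀ hx₀).1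
  have hs₀Icc : s₀ ∈ Set.Icc (0:ℝ) T₂ := (hpQ x₀ hx₀).2
  have hmax : ∀ x ∈ Mt, ∀ t s : ℝ, t ∈ Set.Icc (0:ℝ) T₂ → s ∈ Set.Icc (0:ℝ) T₂ →
      f x t - g x s - ((t-s)^2/(2*δ) + (σ*t + A*(t/T₂)^n) + (σ*s + A*(s/T₂)^n)) ≤
      f x₀ t₀ - g x₀ s₀ - ((t₀-s₀)^2/(2*δ) + (σ*t₀ + A*(t₀/T₂)^n) + (σ*s₀ + A*(s₀/T₂)^n)) := by
    intro x hx t s ht hs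
    have h1 := hpmax x hx (t,s) ⟨ht, hs⟩
    have h2 := hx₀max x hx
    exact le_trans h1 h2
  -- the maximum value is at least θ/2
  have hθ2 : θ/2 ≤ f x₀ t₀ - g x₀ s₀ -
      ((t₀-s₀)^2/(2*δ) + (σ*t₀ + A*(t₀/T₂)^n) + (σ*s₀ + A*(s₀/T₂)^n)) := by
    have h1 := hmax xs hxs ts ts ⟨htspos.le, htsT₂.le⟩ ⟨htspos.le, htsT₂.le⟩
    have h2 : (ts - ts)^2/(2*δ) = 0 := by simp
    have h3 : A*(ts/T₂)^n ≤ θ/16 := by rw [← hκdef]; exact hAκ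
    linarith
  have hfb : f x₀ t₀ ≤ C := hfleC x₀ hx₀ t₀ (hsubIccIco ht₀Icc)
  have hgb : -Cg ≤ g x₀ s₀ := hCg x₀ hx₀ s₀ hs₀Icc
  have hsqnn : (0:ℝ) ≤ (t₀ - s₀)^2/(2*δ) := by positivity
  have hsq : (t₀ - s₀)^2/(2*δ) ≤ C + Cg := by
    linarith [hP1 t₀ ht₀Icc.1, hP1 s₀ hs₀Icc.1]
  have habs : |t₀ - s₀| < r₀ := by
    have h1 : (t₀-s₀)^2 ≤ (C+Cg)*(2*δ) := (div_le_iff₀ (by positivity)).mp hsq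
    have e1 : (C+Cg)*(2*δ) < r₀^2 := by
      rw [show (C+Cg)*(2*δ) = 2*δ*(C+Cg) from by ring, ← hδr]
      linarith
    have h2 : (t₀-s₀)^2 < r₀^2 := lt_of_le_of_lt h1 e1
    calc |t₀ - s₀| = Real.sqrt ((t₀-s₀)^2) := (Real.sqrt_sq_eq_abs _).symm
      _ < Real.sqrt (r₀^2) := Real.sqrt_lt_sqrt (sq_nonneg _) h2
      _ = r₀ := Real.sqrt_sq hr₀pos.le
  by_cases hxΓ : x₀ ∈ Γt
  · -- x₀ on the boundary Γ̃
    have hfb2 : f x₀ t₀ ≤ f0 x₀ := by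
      rcases eq_or_lt_of_le ht₀Icc.1 with h0 | h0
      · rw [← h0]; exact hf_sub.2.2 x₀ hx₀
      · exact hf_sub.2.1 x₀ hxΓ t₀ ⟨h0, lt_of_le_of_lt ht₀Icc.2 hT₂T⟩
    have hgb2 : f0 x₀ ≤ g x₀ s₀ := by
      rcases eq_or_lt_of_le hs₀Icc.1 with h0 | h0
      · rw [← h0]; exact hg_super.2.2 x₀ hx₀
      · exact hg_super.2.1 x₀ hxΓ s₀ ⟨h0, lt_of_le_of_lt hs₀Icc.2 hT₂T⟩
    linarith [hP1 t₀ ht₀Icc.1, hP1 s₀ hs₀Icc.1]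
  rcases eq_or_lt_of_le ht₀Icc.1 with ht₀0 | ht₀pos
  · -- t₀ = 0
    have hs₀r : s₀ < r x₀ := by
      have h1 : r₀ ≤ r x₀ := Finset.inf'_le r hx₀
      have h2 : |t₀ - s₀| = s₀ := by
        rw [← ht₀0, zero_sub, abs_neg, abs_of_nonneg hs₀Icc.1]
      linarith
    have hgg := (hr x₀ hx₀ s₀ (hsubIccIco hs₀Icc) hs₀r).1
    have h1 : f x₀ t₀ ≤ f0 x₀ := by rw [← ht₀0]; exact hf_sub.2.2 x₀ hx₀
    have h2 : f0 x₀ ≤ g x₀ 0 := hg_super.2.2 x₀ hx₀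
    linarith [hP1 t₀ ht₀Icc.1, hP1 s₀ hs₀Icc.1]
  rcases eq_or_lt_of_le hs₀Icc.1 with hs₀0 | hs₀pos
  · -- s₀ = 0
    have ht₀r : t₀ < r x₀ := by
      have h1 : r₀ ≤ r x₀ := Finset.inf'_le r hx₀
      have h2 : |t₀ - s₀| = t₀ := by
        rw [← hs₀0, sub_zero, abs_of_nonneg ht₀Icc.1]
      linarith
    have hff := (hr x₀ hx₀ t₀ (hsubIccIco ht₀Icc) ht₀r).2
    have h1 : f x₀ 0 ≤ f0 x₀ := hf_sub.2.2 x₀ hx₀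
    have h2 : f0 x₀ ≤ g x₀ 0 := hg_super.2.2 x₀ hx₀
    rw [← hs₀0] at hθ2
    linarith [hP1 t₀ ht₀Icc.1, hP1 (0:ℝ) le_rfl,
      div_nonneg (sq_nonneg (t₀-0)) (by positivity : (0:ℝ) ≤ 2*δ)]
  rcases eq_or_lt_of_le ht₀Icc.2 with ht₀T | ht₀T
  · -- t₀ = T₂
    have hp : A*(t₀/T₂)^n = A := by rw [ht₀T, div_self hT₂0.ne', one_pow, mul_one]
    have h1 : 0 ≤ σ*t₀ := mul_nonneg hσ.le ht₀Icc.1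
    linarith [hP1 s₀ hs₀Icc.1]
  rcases eq_or_lt_of_le hs₀Icc.2 with hs₀T | hs₀T
  · -- s₀ = T₂
    have hp : A*(s₀/T₂)^n = A := by rw [hs₀T, div_self hT₂0.ne', one_pow, mul_one]
    have h1 : 0 ≤ σ*s₀ := mul_nonneg hσ.le hs₀Icc.1
    linarith [hP1 t₀ ht₀Icc.1]
  -- interior case
  have ht₀T' : t₀ < T := lt_trans ht₀T hT₂T
  have hs₀T' : s₀ < T := lt_trans hs₀T hT₂T
  -- test function for the sub-solution
  set φt : ℝ → ℝ := fun t => (t - s₀)^2/(2*δ) + (σ*t + A*(t/T₂)^n) with hφdef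
  have hφC1 : ContDiff ℝ 1 φt := by
    rw [hφdef]
    apply ContDiff.add
    · exact ((contDiff_id.sub contDiff_const).pow 2).div_const _
    · exact (contDiff_const.mul contDiff_id).add
        (contDiff_const.mul ((contDiff_id.div_const _).pow n))
  have h1d : HasDerivAt (fun t : ℝ => (t - s₀)^2/(2*δ)) ((t₀-s₀)/δ) t₀ := by
    have h := (((hasDerivAt_id t₀).sub_const s₀).pow 2).div_const (2*δ)
    refine h.congr_deriv ?_
    simp only [id_eq, pow_one]
    field_simp
    ring
  have h2d : HasDerivAt (fun t : ℝ => σ*t) σ t₀ := by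
    simpa using (hasDerivAt_id t₀).const_mul σ
  have h3d : HasDerivAt (fun t : ℝ => A*(t/T₂)^n)
      (A*((n:ℝ)*(t₀/T₂)^(n-1)*(1/T₂))) t₀ := by
    have h := (((hasDerivAt_id t₀).div_const T₂).pow n).const_mul A
    simpa using h
  have hφd : HasDerivAt φt ((t₀-s₀)/δ + (σ + A*((n:ℝ)*(t₀/T₂)^(n-1)*(1/T₂)))) t₀ := by
    rw [hφdef]
    exact h1d.add (h2d.add h3d)
  have hφlb : (t₀-s₀)/δ + σ ≤ deriv φt t₀ := by
    rw [hφd.deriv]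
    have h5 : 0 ≤ A*((n:ℝ)*(t₀/T₂)^(n-1)*(1/T₂)) :=
      mul_nonneg hA.le (mul_nonneg (mul_nonneg (Nat.cast_nonneg n)
        (pow_nonneg (div_nonneg ht₀Icc.1 hT₂0.le) _)) (by positivity))
    linarith
  have hlocmax : IsLocalMax (fun t => f x₀ t - φt t) t₀ := by
    have hmem : Set.Ioo (0:ℝ) T₂ ∈ 𝓝 t₀ := Ioo_mem_nhds ht₀pos ht₀T
    filter_upwards [hmem] with t ht
    have h4 := hmax x₀ hx₀ t s₀ ⟨ht.1.le, ht.2.le⟩ hs₀Icc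
    show f x₀ t - φt t ≤ f x₀ t₀ - φt t₀
    simp only [hφdef]
    linarith
  have hsubineq := hf_sub.1 x₀ hx₀ hxΓ t₀ ⟨ht₀pos, ht₀T'⟩ φt hφC1 hlocmax
  -- test function for the super-solution
  set χt : ℝ → ℝ := fun s => -((t₀ - s)^2/(2*δ)) - (σ*s + A*(s/T₂)^n) with hχdef
  have hχC1 : ContDiff ℝ 1 χt := by
    rw [hχdef]
    apply ContDiff.sub
    · exact (((contDiff_const.sub contDiff_id).pow 2).div_const _).neg
    · exact (contDiff_const.mul contDiff_id).add
        (contDiff_const.mul ((contDiff_id.div_const _).pow n))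
  have k1d : HasDerivAt (fun s : ℝ => -((t₀ - s)^2/(2*δ))) ((t₀-s₀)/δ) s₀ := by
    have h := ((((hasDerivAt_id s₀).const_sub t₀).pow 2).div_const (2*δ)).neg
    refine h.congr_deriv ?_
    simp only [id_eq, pow_one]
    field_simp
    ring
  have k2d : HasDerivAt (fun s : ℝ => σ*s) σ s₀ := by
    simpa using (hasDerivAt_id s₀).const_mul σ
  have k3d : HasDerivAt (fun s : ℝ => A*(s/T₂)^n)
      (A*((n:ℝ)*(s₀/T₂)^(n-1)*(1/T₂))) s₀ := by
    have h := (((hasDerivAt_id s₀).div_const T₂).pow n).const_mul A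
    simpa using h
  have hχd : HasDerivAt χt ((t₀-s₀)/δ - (σ + A*((n:ℝ)*(s₀/T₂)^(n-1)*(1/T₂)))) s₀ := by
    rw [hχdef]
    exact k1d.sub (k2d.add k3d)
  have hχub : deriv χt s₀ ≤ (t₀-s₀)/δ - σ := by
    rw [hχd.deriv]
    have h5 : 0 ≤ A*((n:ℝ)*(s₀/T₂)^(n-1)*(1/T₂)) :=
      mul_nonneg hA.le (mul_nonneg (mul_nonneg (Nat.cast_nonneg n)
        (pow_nonneg (div_nonneg hs₀Icc.1 hT₂0.le) _)) (by positivity))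
    linarith
  have hlocmin : IsLocalMin (fun s => g x₀ s - χt s) s₀ := by
    have hmem : Set.Ioo (0:ℝ) T₂ ∈ 𝓝 s₀ := Ioo_mem_nhds hs₀pos hs₀T
    filter_upwards [hmem] with s hs
    have h4 := hmax x₀ hx₀ t₀ s ht₀Icc ⟨hs.1.le, hs.2.le⟩
    show g x₀ s₀ - χt s₀ ≤ g x₀ s - χt s
    simp only [hχdef]
    linarith
  have hsupineq := hg_super.1 x₀ hx₀ hxΓ s₀ ⟨hs₀pos, hs₀T'⟩ χt hχC1 hlocmin
  -- comparison of the nonlocal gradients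
  have hGG : nonlocalGrad Mt hMt (Jker η Cη ε dt) g x₀ s₀ ≤
      nonlocalGrad Mt hMt (Jker η Cη ε dt) f x₀ t₀ := by
    unfold nonlocalGrad
    apply Finset.sup'_le
    intro y hy
    have h4 := hmax y hy t₀ s₀ ht₀Icc hs₀Icc
    have h5 : g x₀ s₀ - g y s₀ ≤ f x₀ t₀ - f y t₀ := by linarith
    calc Jker η Cη ε dt x₀ y * (g x₀ s₀ - g y s₀)
        ≤ Jker η Cη ε dt x₀ y * (f x₀ t₀ - f y t₀) :=
          mul_le_mul_of_nonneg_left h5 (hJ x₀ y)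
      _ ≤ _ := Finset.le_sup' (fun z => Jker η Cη ε dt x₀ z * (f x₀ t₀ - f z t₀)) hy
  linarith [hφlb, hχub, hsubineq, hsupineq, hGG]
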